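/- Let q be a prime power and m, r, g positive integers, and let C ⊆ F_{q^m}^{gr} be any (linear or non-linear) code with |C| ≥ 2. Then |C| ≤ q^{m(gr − d_SR(C) + 1)}, where d_SR(C) is the minimum sum-rank distance of C for the length partition (g, r) over F_q. Moreover, equality holds if and only if, for all invertible matrices A_1, A_2, …, A_g ∈ GL_r(F_q), the code C·diag(A_1, A_2, …, A_g) ⊆ F_{q^m}^{gr} is an MDS code (with respect to the Hamming metric), where diag denotes the block-diagonal matrix. -/

import Mathlib

/-- The sum-rank weight of a vector partitioned into blocks of length `r`, over the base
field `Fq`: the sum over blocks of the `Fq`-dimension of the span of the block entries. -/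
noncomputable def wtSR (Fq : Type) {L : Type} [Field Fq] [Field L] [Algebra Fq L]
    {ι : Type} [Fintype ι] {r : ℕ} (c : ι × Fin r → L) : ℕ :=
  ∑ i : ι, Module.finrank Fq
    ↥(Submodule.span Fq (Set.range fun j : Fin r => c (i, j)))

/-- The minimum sum-rank distance of a code (a set of vectors), over the base field
`Fq`, for blocks of length `r`. -/
noncomputable def dSR (Fq : Type) {L : Type} [Field Fq] [Field L] [Algebra Fq L]
    {ι : Type} [Fintype ι] {r : ℕ} (C : Set (ι × Fin r → L)) : ℕ :=
  sInf {w | ∃ c ∈ C, ∃ d ∈ C, c ≠ d ∧ wtSR Fq (c - d) = w}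

/-- The Hamming distance between two vectors: the number of coordinates where they
differ. -/
noncomputable def hdist {F ι : Type} (c d : ι → F) : ℕ :=
  Nat.card {i // c i ≠ d i}

/-- The minimum Hamming distance of a code (a set of vectors). -/
noncomputable def minHD {F ι : Type} (S : Set (ι → F)) : ℕ :=
  sInf {w | ∃ c ∈ S, ∃ d ∈ S, c ≠ d ∧ hdist c d = w}

/-- The block-diagonal matrix over `K` built from `r × r` matrices over the subfield
`Fq`, one for each block index in `ι`. -/
def BlockDiag (Fq K : Type) [Field Fq] [Field K] [Algebra Fq K]
    {ι : Type} [DecidableEq ι] {r : ℕ}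
    (A : ι → Matrix (Fin r) (Fin r) Fq) : Matrix (ι × Fin r) (ι × Fin r) K :=
  fun x y => if x.1 = y.1 then algebraMap Fq K (A x.1 x.2 y.2) else 0

section Aux

open Submodule Module

variable {Fq K : Type} [Field Fq] [Field K] [Algebra Fq K]

/-- Multiply a block-vector over `K` by a matrix over the subfield `Fq`. -/
noncomputable def vma {r : ℕ} (v : Fin r → K) (A : Matrix (Fin r) (Fin r) Fq) : Fin r → K :=
  fun j => ∑ k, A k j • v k

lemma vecMul_blockDiag {g r : ℕ} (c : Fin g × Fin r → K)
    (A : Fin g → Matrix (Fin r) (Fin r) Fq) (i : Fin g) (j : Fin r) :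
    Matrix.vecMul c (BlockDiag Fq K A) (i, j) = vma (fun j' => c (i, j')) (A i) j := by
  classical
  simp only [Matrix.vecMul, dotProduct, BlockDiag, vma]
  rw [Fintype.sum_prod_type]
  have : ∀ i' : Fin g,
      (∑ j' : Fin r, c (i', j') * (if i' = i then algebraMap Fq K (A i' j' j) else 0))
      = if i = i' then ∑ j' : Fin r, (A i j' j) • c (i, j') else 0 := by
    intro i'
    by_cases h : i' = i
    · subst h
      simp [Algebra.smul_def, mul_comm]
    · simp [h, Ne.symm h]
  rw [Finset.sum_congr rfl fun i' _ => this i', Finset.sum_ite_eq]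
  simp

lemma vma_mem_span {r : ℕ} (v : Fin r → K) (A : Matrix (Fin r) (Fin r) Fq) (j : Fin r) :
    vma v A j ∈ span Fq (Set.range v) := by
  refine Submodule.sum_mem _ fun k _ => Submodule.smul_mem _ _ (subset_span ⟨k, rfl⟩)

lemma span_vma_le {r : ℕ} (v : Fin r → K) (A : Matrix (Fin r) (Fin r) Fq) :
    span Fq (Set.range (vma v A)) ≤ span Fq (Set.range v) := by
  rw [span_le]
  rintro x ⟨j, rfl⟩
  exact vma_mem_span v A j

lemma vma_vma {r : ℕ} (v : Fin r → K) (A B : Matrix (Fin r) (Fin r) Fq) :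
    vma (vma v A) B = vma v (A * B) := by
  funext j
  simp only [vma, Matrix.mul_apply, Finset.smul_sum, Finset.sum_smul, smul_smul]
  rw [Finset.sum_comm]
  refine Finset.sum_congr rfl fun l _ => Finset.sum_congr rfl fun k _ => by
    rw [mul_comm]

lemma vma_one {r : ℕ} (v : Fin r → K) : vma v (1 : Matrix (Fin r) (Fin r) Fq) = v := by
  funext j
  classical
  simp only [vma, Matrix.one_apply, ite_smul, one_smul, zero_smul]
  rw [Finset.sum_ite_eq' Finset.univ j (fun k => v k)]
  simp

lemma vma_cancel {r : ℕ} (v : Fin r → K) {A : Matrix (Fin r) (Fin r) Fq}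
    (hA : IsUnit A.det) : vma (vma v A) A⁻¹ = v := by
  rw [vma_vma, Matrix.mul_nonsing_inv _ hA, vma_one]

lemma span_vma_eq {r : ℕ} (v : Fin r → K) {A : Matrix (Fin r) (Fin r) Fq}
    (hA : IsUnit A.det) :
    span Fq (Set.range (vma v A)) = span Fq (Set.range v) := by
  refine le_antisymm (span_vma_le v A) ?_
  conv_lhs => rw [← vma_cancel v hA]
  exact span_vma_le (vma v A) A⁻¹

lemma finrank_span_le_card_ne [FiniteDimensional Fq K] {r : ℕ} (v : Fin r → K) :
    finrank Fq (span Fq (Set.range v)) ≤ Nat.card {j // v j ≠ 0} := by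
  classical
  set t : Set (Fin r) := {j | v j ≠ 0} with ht
  have hsub : Set.range v ⊆ insert 0 (v '' t) := by
    rintro x ⟨j, rfl⟩
    by_cases h : v j = 0
    · exact h ▸ Set.mem_insert _ _
    · exact Set.mem_insert_of_mem _ ⟨j, h, rfl⟩
  calc finrank Fq (span Fq (Set.range v))
      ≤ finrank Fq (span Fq (insert 0 (v '' t))) := finrank_mono (span_mono hsub)
    _ = finrank Fq (span Fq (v '' t)) := by rw [span_insert_zero]
    _ ≤ (v '' t).toFinset.card := finrank_span_le_card _
    _ = (v '' t).ncard := (Set.ncard_eq_toFinset_card' _).symm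
    _ ≤ t.ncard := Set.ncard_image_le (Set.toFinite t)
    _ = Nat.card {j // v j ≠ 0} := (Nat.card_coe_set_eq t).symm

lemma exists_good_matrix [FiniteDimensional Fq K] {r : ℕ} (v : Fin r → K) :
    ∃ A : Matrix (Fin r) (Fin r) Fq, IsUnit A.det ∧
      Nat.card {j // vma v A j ≠ 0} = finrank Fq (span Fq (Set.range v)) := by
  classical
  set φ : (Fin r → Fq) →ₗ[Fq] K := Fintype.linearCombination Fq v with hφ
  have hφ_apply : ∀ x : Fin r → Fq, φ x = ∑ k, x k • v k := fun x =>
    Fintype.linearCombination_apply Fq v x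
  have hrange : LinearMap.range φ = span Fq (Set.range v) :=
    Fintype.range_linearCombination Fq v
  set k := finrank Fq (span Fq (Set.range v)) with hk
  set W := LinearMap.ker φ with hW
  have hrn : k + finrank Fq W = r := by
    have := LinearMap.finrank_range_add_finrank_ker φ
    rw [hrange] at this
    simpa using this
  obtain ⟨U, hU⟩ := Submodule.exists_isCompl W
  have hWU : finrank Fq W + finrank Fq U = r := by
    have := Submodule.finrank_add_eq_of_isCompl hU
    simpa using this
  set bW := Module.finBasis Fq W
  set bU := Module.finBasis Fq U
  set B0 : Basis (Fin (finrank Fq W) ⊕ Fin (finrank Fq U)) Fq (Fin r → Fq) :=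
    (bW.prod bU).map (Submodule.prodEquivOfIsCompl W U hU) with hB0
  set e : Fin (finrank Fq W) ⊕ Fin (finrank Fq U) ≃ Fin r :=
    finSumFinEquiv.trans (finCongr hWU) with he
  set B : Basis (Fin r) Fq (Fin r → Fq) := B0.reindex e with hB
  set A : Matrix (Fin r) (Fin r) Fq := (Pi.basisFun Fq (Fin r)).toMatrix ⇑B with hA
  haveI : Invertible A := (Pi.basisFun Fq (Fin r)).invertibleToMatrix B
  have hAdet : IsUnit A.det := Matrix.isUnit_det_of_invertible A
  have hentry : ∀ j, vma v A j = φ (B j) := by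
    intro j
    rw [hφ_apply]
    refine Finset.sum_congr rfl fun l _ => ?_
    have hAe : A l j = B j l := by
      simp [hA, Basis.toMatrix_apply, Pi.basisFun_repr]
    rw [hAe]
  have hzero : ∀ i : Fin (finrank Fq W), vma v A (e (Sum.inl i)) = 0 := by
    intro i
    rw [hentry]
    have hBi : B (e (Sum.inl i)) = ((bW i : W) : Fin r → Fq) := by
      rw [hB, Module.Basis.reindex_apply, Equiv.symm_apply_apply, hB0, Basis.map_apply,
        Basis.prod_apply]
      simp
    rw [hBi]
    exact LinearMap.mem_ker.mp (bW i).2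
  refine ⟨A, hAdet, le_antisymm ?_ ?_⟩
  · -- at most k nonzero entries
    have hinj : Function.Injective (fun i : Fin (finrank Fq W) =>
        (⟨e (Sum.inl i), hzero i⟩ : {j // vma v A j = 0})) := by
      intro a b hab
      have := congrArg Subtype.val hab
      exact Sum.inl_injective (e.injective this)
    have h1 : finrank Fq W ≤ Nat.card {j // vma v A j = 0} := by
      have := Nat.card_le_card_of_injective _ hinj
      simpa using this
    have h2 : Nat.card {j // vma v A j ≠ 0} = r - Nat.card {j // vma v A j = 0} := by
      rw [Nat.card_eq_fintype_card, Nat.card_eq_fintype_card,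
        Fintype.card_subtype_compl]
      simp
    omega
  · -- at least k nonzero entries
    calc k = finrank Fq (span Fq (Set.range (vma v A))) := by
          rw [span_vma_eq v hAdet]
      _ ≤ Nat.card {j // vma v A j ≠ 0} := finrank_span_le_card_ne _

lemma card_ne_prod {g r : ℕ} {F : Type} (w : Fin g × Fin r → F) (z : F) :
    Nat.card {x // w x ≠ z} = ∑ i : Fin g, Nat.card {j // w (i, j) ≠ z} := by
  classical
  rw [Nat.card_eq_fintype_card,
    Fintype.card_congr (Equiv.subtypeProdEquivSigmaSubtype fun i j => w (i, j) ≠ z),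
    Fintype.card_sigma]
  exact Finset.sum_congr rfl fun i _ => (Nat.card_eq_fintype_card).symm

lemma wtSR_le_card_ne [FiniteDimensional Fq K] {g r : ℕ} (v : Fin g × Fin r → K) :
    wtSR Fq v ≤ Nat.card {x // v x ≠ 0} := by
  rw [card_ne_prod v 0]
  exact Finset.sum_le_sum fun i _ => finrank_span_le_card_ne _

lemma one_le_wtSR [FiniteDimensional Fq K] {g r : ℕ} (v : Fin g × Fin r → K)
    (hv : v ≠ 0) : 1 ≤ wtSR Fq v := by
  obtain ⟨x, hx⟩ : ∃ x, v x ≠ 0 := by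
    by_contra h
    push_neg at h
    exact hv (funext fun x => h x)
  obtain ⟨i, j⟩ := x
  have hmem : v (i, j) ∈ span Fq (Set.range fun j' : Fin r => v (i, j')) :=
    subset_span ⟨j, rfl⟩
  have hpos : 0 < finrank Fq (span Fq (Set.range fun j' : Fin r => v (i, j'))) := by
    rw [finrank_pos_iff]
    exact ⟨⟨v (i, j), hmem⟩, 0, by simpa using hx⟩
  unfold wtSR
  exact le_trans hpos (Finset.single_le_sum
    (f := fun i : Fin g => finrank Fq (span Fq (Set.range fun j' : Fin r => v (i, j'))))
    (fun _ _ => Nat.zero_le _) (Finset.mem_univ i))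

lemma wtSR_vecMul {g r : ℕ} (c : Fin g × Fin r → K)
    {A : Fin g → Matrix (Fin r) (Fin r) Fq} (hA : ∀ i, IsUnit (A i).det) :
    wtSR Fq (Matrix.vecMul c (BlockDiag Fq K A)) = wtSR Fq c := by
  unfold wtSR
  refine Finset.sum_congr rfl fun i _ => ?_
  have h : (fun j : Fin r => Matrix.vecMul c (BlockDiag Fq K A) (i, j))
      = vma (fun j' => c (i, j')) (A i) := funext fun j => vecMul_blockDiag c A i j
  rw [h, span_vma_eq _ (hA i)]

lemma blockDiag_injective {g r : ℕ} {A : Fin g → Matrix (Fin r) (Fin r) Fq}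
    (hA : ∀ i, IsUnit (A i).det) :
    Function.Injective (fun c : Fin g × Fin r → K => Matrix.vecMul c (BlockDiag Fq K A)) := by
  intro c d h
  funext x
  obtain ⟨i, j⟩ := x
  have hb : vma (fun j' => c (i, j')) (A i) = vma (fun j' => d (i, j')) (A i) := by
    funext j'
    rw [← vecMul_blockDiag, ← vecMul_blockDiag]
    exact congrFun h (i, j')
  have := congrArg (fun w => vma w (A i)⁻¹ j) hb
  simpa [vma_cancel _ (hA i)] using this

lemma exists_good_blocks [FiniteDimensional Fq K] {g r : ℕ} (v : Fin g × Fin r → K) :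
    ∃ A : Fin g → Matrix (Fin r) (Fin r) Fq, (∀ i, IsUnit (A i).det) ∧
      Nat.card {x // Matrix.vecMul v (BlockDiag Fq K A) x ≠ 0} = wtSR Fq v := by
  classical
  choose A hA hcard using fun i : Fin g => exists_good_matrix (Fq := Fq) (fun j => v (i, j))
  refine ⟨A, hA, ?_⟩
  rw [card_ne_prod _ 0]
  unfold wtSR
  refine Finset.sum_congr rfl fun i _ => ?_
  have h : ∀ j, Matrix.vecMul v (BlockDiag Fq K A) (i, j) = vma (fun j' => v (i, j')) (A i) j :=
    fun j => vecMul_blockDiag v A i j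
  rw [show {j // Matrix.vecMul v (BlockDiag Fq K A) (i, j) ≠ 0}
      = {j // vma (fun j' => v (i, j')) (A i) j ≠ 0} from by simp only [h]]
  exact hcard i

end Aux

section Hamming

lemma hdist_pos {F ι : Type} [Finite ι] {c d : ι → F} (h : c ≠ d) : 1 ≤ hdist c d := by
  obtain ⟨i, hi⟩ : ∃ i, c i ≠ d i := Function.ne_iff.mp h
  have : Nonempty {i // c i ≠ d i} := ⟨⟨i, hi⟩⟩
  have : 0 < Nat.card {i // c i ≠ d i} := Nat.card_pos
  exact this

lemma hdist_le {F ι : Type} [Fintype ι] (c d : ι → F) : hdist c d ≤ Fintype.card ι := by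
  have := Nat.card_le_card_of_injective (Subtype.val : {i // c i ≠ d i} → ι)
    Subtype.val_injective
  simpa [hdist, Nat.card_eq_fintype_card] using this

lemma hdist_eq_card_sub_ne {F ι : Type} [AddGroup F] (c d : ι → F) :
    hdist c d = Nat.card {i // (c - d) i ≠ 0} := by
  exact Nat.card_congr (Equiv.subtypeEquivRight fun i => by simp [sub_ne_zero])

lemma minHD_spec {F ι : Type} [Fintype F] [Fintype ι] (S : Set (ι → F))
    (hS : 2 ≤ Nat.card S) :
    (∃ c ∈ S, ∃ d ∈ S, c ≠ d ∧ hdist c d = minHD S) ∧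
      (∀ c ∈ S, ∀ d ∈ S, c ≠ d → minHD S ≤ hdist c d) := by
  have hne : {w | ∃ c ∈ S, ∃ d ∈ S, c ≠ d ∧ hdist c d = w}.Nonempty := by
    rw [Nat.card_coe_set_eq] at hS
    obtain ⟨a, b, ha, hb, hab⟩ := (Set.one_lt_ncard_iff (Set.toFinite S)).mp (by omega)
    exact ⟨hdist a b, a, ha, b, hb, hab, rfl⟩
  constructor
  · obtain ⟨c, hc, d, hd, hcd, hw⟩ := Nat.sInf_mem hne
    exact ⟨c, hc, d, hd, hcd, hw⟩
  · intro c hc d hd hcd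
    exact Nat.sInf_le ⟨c, hc, d, hd, hcd, rfl⟩

lemma hamming_singleton {F ι : Type} [Fintype F] [Fintype ι] (S : Set (ι → F))
    (hS : 2 ≤ Nat.card S) :
    Nat.card S ≤ Fintype.card F ^ (Fintype.card ι - minHD S + 1) := by
  classical
  obtain ⟨⟨c₀, hc₀, d₀, hd₀, hne₀, hdd⟩, hmin⟩ := minHD_spec S hS
  set dd := minHD S with hdef
  have hd1 : 1 ≤ dd := hdd ▸ hdist_pos hne₀
  have hdn : dd ≤ Fintype.card ι := hdd ▸ hdist_le c₀ d₀
  obtain ⟨T, -, hT⟩ := Finset.exists_subset_card_eq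
    (s := (Finset.univ : Finset ι)) (n := dd - 1) (by simp; omega)
  have hinj : Set.InjOn (fun c (i : {i // i ∉ T}) => c i.1) S := by
    intro a ha b hb hab
    by_contra hne
    have hmem : ∀ i, a i ≠ b i → i ∈ T := by
      intro i hi
      by_contra hiT
      exact hi (congrFun hab ⟨i, hiT⟩)
    have h1 : hdist a b ≤ T.card := by
      have := Nat.card_le_card_of_injective
        (fun x : {i // a i ≠ b i} => (⟨x.1, hmem x.1 x.2⟩ : {i // i ∈ T}))
        (fun x y hxy => Subtype.ext (by simpa using congrArg Subtype.val hxy))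
      simpa [hdist, Nat.card_eq_fintype_card, Fintype.card_coe] using this
    have h2 := hmin a ha b hb hne
    omega
  have hcomp : Fintype.card {i // i ∉ T} = Fintype.card ι - dd + 1 := by
    have h3 : Fintype.card {i // i ∈ T} = T.card := Fintype.card_coe T
    rw [Fintype.card_subtype_compl, h3, hT]
    omega
  calc Nat.card S = S.ncard := Nat.card_coe_set_eq S
    _ = ((fun c (i : {i // i ∉ T}) => c i.1) '' S).ncard :=
        (Set.ncard_image_of_injOn hinj).symm
    _ ≤ (Set.univ : Set ({i // i ∉ T} → F)).ncard :=
        Set.ncard_le_ncard (Set.subset_univ _) Set.finite_univ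
    _ = Nat.card ({i // i ∉ T} → F) := Set.ncard_univ _
    _ = Fintype.card F ^ (Fintype.card ι - dd + 1) := by
        rw [Nat.card_eq_fintype_card, Fintype.card_fun, hcomp]

end Hamming

/-- (Singleton bound for the sum-rank metric.) Any code `C ⊆ F_{q^m}^{gr}`
with `|C| ≥ 2` satisfies `|C| ≤ q^{m(gr − d_SR(C) + 1)}`, with equality iff
`C·diag(A_1,…,A_g)` is MDS for all invertible `A_1,…,A_g ∈ GL_r(F_q)`. -/
theorem sum_rank_singleton_bound
    (q m g r : ℕ) (hq : IsPrimePow q) (hm : 0 < m) (hg : 0 < g) (hr : 0 < r)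
    (Fq K : Type) [Field Fq] [Field K] [Fintype Fq] [Fintype K] [Algebra Fq K]
    (hcq : Fintype.card Fq = q) (hcK : Fintype.card K = q ^ m)
    (C : Set (Fin g × Fin r → K)) (hC : 2 ≤ Nat.card ↥C) :
    Nat.card ↥C ≤ (q ^ m) ^ (g * r - dSR Fq C + 1) ∧
    (Nat.card ↥C = (q ^ m) ^ (g * r - dSR Fq C + 1) ↔
      ∀ A : Fin g → Matrix (Fin r) (Fin r) Fq, (∀ i, IsUnit (A i).det) →
        Nat.card ↥((fun c => Matrix.vecMul c (BlockDiag Fq K A)) '' C)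
          = (q ^ m) ^ (g * r -
              minHD ((fun c => Matrix.vecMul c (BlockDiag Fq K A)) '' C) + 1)) := by
  classical
  haveI : Module.Finite Fq K := Module.Finite.of_finite
  have hn : Fintype.card (Fin g × Fin r) = g * r := by simp
  -- basic facts about C
  have hCfin : C.Finite := Set.toFinite C
  -- a pair achieving dSR
  have hDne : {w | ∃ c ∈ C, ∃ d ∈ C, c ≠ d ∧ wtSR Fq (c - d) = w}.Nonempty := by
    have h2 : 2 ≤ C.ncard := by rwa [Nat.card_coe_set_eq] at hC
    obtain ⟨a, b, ha, hb, hab⟩ := (Set.one_lt_ncard_iff hCfin).mp (by omega)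
    exact ⟨wtSR Fq (a - b), a, ha, b, hb, hab, rfl⟩
  obtain ⟨c₁, hc₁, d₁, hd₁, hne₁, hw₁⟩ := Nat.sInf_mem hDne
  have hdSR_le : ∀ c ∈ C, ∀ d ∈ C, c ≠ d → dSR Fq C ≤ wtSR Fq (c - d) :=
    fun c hc d hd h => Nat.sInf_le ⟨c, hc, d, hd, h, rfl⟩
  -- notation for image codes
  set f : (Fin g → Matrix (Fin r) (Fin r) Fq) → (Fin g × Fin r → K) → (Fin g × Fin r → K) :=
    fun A c => Matrix.vecMul c (BlockDiag Fq K A) with hf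
  -- cardinality is preserved
  have hcard_img : ∀ A : Fin g → Matrix (Fin r) (Fin r) Fq, (∀ i, IsUnit (A i).det) →
      Nat.card ((f A) '' C : Set (Fin g × Fin r → K)) = Nat.card C := by
    intro A hA
    rw [Nat.card_coe_set_eq, Nat.card_coe_set_eq]
    exact Set.ncard_image_of_injOn ((blockDiag_injective hA).injOn)
  -- d_SR is a lower bound for the min Hamming distance of any transformed code
  have hdSR_le_minHD : ∀ A : Fin g → Matrix (Fin r) (Fin r) Fq, (∀ i, IsUnit (A i).det) →
      dSR Fq C ≤ minHD ((f A) '' C) := by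
    intro A hA
    have h2 : 2 ≤ Nat.card ((f A) '' C : Set (Fin g × Fin r → K)) := by
      rw [hcard_img A hA]; exact hC
    obtain ⟨⟨a, ha, b, hb, hab, hd⟩, -⟩ := minHD_spec _ h2
    obtain ⟨a0, ha0, rfl⟩ := ha
    obtain ⟨b0, hb0, rfl⟩ := hb
    have hne : a0 ≠ b0 := fun h => hab (by rw [h])
    calc dSR Fq C ≤ wtSR Fq (a0 - b0) := hdSR_le a0 ha0 b0 hb0 hne
      _ = wtSR Fq (Matrix.vecMul (a0 - b0) (BlockDiag Fq K A)) :=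
          (wtSR_vecMul (a0 - b0) hA).symm
      _ ≤ Nat.card {x // Matrix.vecMul (a0 - b0) (BlockDiag Fq K A) x ≠ 0} :=
          wtSR_le_card_ne _
      _ = hdist (f A a0) (f A b0) := by
          rw [hdist_eq_card_sub_ne]
          refine Nat.card_congr (Equiv.subtypeEquivRight fun x => ?_)
          simp [hf, Matrix.sub_vecMul]
      _ = minHD ((f A) '' C) := hd
  -- a transformed code achieving minHD = dSR
  obtain ⟨A₀, hA₀, hA₀card⟩ := exists_good_blocks (Fq := Fq) (c₁ - d₁)
  have hminHD₀ : minHD ((f A₀) '' C) = dSR Fq C := by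
    refine le_antisymm ?_ (hdSR_le_minHD A₀ hA₀)
    have hmem : f A₀ c₁ ∈ (f A₀) '' C := ⟨c₁, hc₁, rfl⟩
    have hmem' : f A₀ d₁ ∈ (f A₀) '' C := ⟨d₁, hd₁, rfl⟩
    have hne : f A₀ c₁ ≠ f A₀ d₁ := fun h => hne₁ (blockDiag_injective hA₀ h)
    have hdist_eq : hdist (f A₀ c₁) (f A₀ d₁) = dSR Fq C := by
      rw [hdist_eq_card_sub_ne]
      rw [show f A₀ c₁ - f A₀ d₁ = Matrix.vecMul (c₁ - d₁) (BlockDiag Fq K A₀) from by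
        rw [hf]; simp [Matrix.sub_vecMul]]
      rw [hA₀card, hw₁]
      rfl
    exact hdist_eq ▸ Nat.sInf_le ⟨f A₀ c₁, hmem, f A₀ d₁, hmem', hne, rfl⟩
  -- Hamming Singleton bound on each transformed code
  have hHS : ∀ A : Fin g → Matrix (Fin r) (Fin r) Fq, (∀ i, IsUnit (A i).det) →
      Nat.card ((f A) '' C : Set (Fin g × Fin r → K)) ≤
        (q ^ m) ^ (g * r - minHD ((f A) '' C) + 1) := by
    intro A hA
    have h2 : 2 ≤ Nat.card ((f A) '' C : Set (Fin g × Fin r → K)) := by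
      rw [hcard_img A hA]; exact hC
    have := hamming_singleton ((f A) '' C) h2
    rwa [hcK, hn] at this
  -- the Singleton bound
  have hbound : Nat.card C ≤ (q ^ m) ^ (g * r - dSR Fq C + 1) := by
    have := hHS A₀ hA₀
    rwa [hcard_img A₀ hA₀, hminHD₀] at this
  refine ⟨hbound, ?_, ?_⟩
  · -- equality implies MDS for every A
    intro heq A hA
    refine le_antisymm (hHS A hA) ?_
    have hqm1 : 1 ≤ q ^ m := by
      rw [← hcK]; exact Fintype.card_pos
    have hmono : (q ^ m) ^ (g * r - minHD ((f A) '' C) + 1) ≤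
        (q ^ m) ^ (g * r - dSR Fq C + 1) :=
      Nat.pow_le_pow_right hqm1 (by
        have := hdSR_le_minHD A hA
        omega)
    calc (q ^ m) ^ (g * r - minHD ((f A) '' C) + 1)
        ≤ (q ^ m) ^ (g * r - dSR Fq C + 1) := hmono
      _ = Nat.card C := heq.symm
      _ = Nat.card ((f A) '' C : Set (Fin g × Fin r → K)) := (hcard_img A hA).symm
  · -- MDS for every A implies equality
    intro hMDS
    have := hMDS A₀ hA₀
    rw [hminHD₀, hcard_img A₀ hA₀] at this
    exact this
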